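/- Let R be a (not necessarily commutative) ring with a discrete valuation v having nonnegative values, let Γ be a finite subgroup of the group of units of R, let σ ∈ R, and let m ≥ 0 be an integer. Suppose s is the least positive integer such that v(σ^s − γ) ≥ m for some γ ∈ Γ, and fix γ₀ ∈ Γ with v(σ^s − γ₀) ≥ m. Then for every integer n ≥ 1 and every γ ∈ Γ: v(σ^{sn} − γ) ≥ m if and only if v(γ·γ₀^{−n} − 1) ≥ m. (Equivalently, the set {γ ∈ Γ : v(σ^{sn} − γ) ≥ m} equals Γ_m·γ₀^n, where Γ_m = {γ ∈ Γ : v(γ − 1) ≥ m}.) -/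

import Mathlib

/-- If s is the least positive integer with v(σ^s − γ) ≥ m for some γ in a finite subgroup Γ
of units, and γ₀ ∈ Γ satisfies v(σ^s − γ₀) ≥ m, then for n ≥ 1 and γ ∈ Γ one has
v(σ^{sn} − γ) ≥ m if and only if v(γ·γ₀^{−n} − 1) ≥ m. -/
theorem valuation_subsequence_coset {R : Type*} [Ring R]
    (v : R → WithTop ℤ)
    (hv0 : ∀ x : R, v x = ⊤ ↔ x = 0)
    (hvmul : ∀ x y : R, v (x * y) = v x + v y)
    (hvadd : ∀ x y : R, min (v x) (v y) ≤ v (x + y))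
    (hnonneg : ∀ x : R, x ≠ 0 → 0 ≤ v x)
    (Γ : Subgroup Rˣ) (hΓfin : (Γ : Set Rˣ).Finite)
    (σ : R) (m : ℕ)
    (s : ℕ) (hs : 0 < s)
    (γ₀ : Rˣ) (hγ₀ : γ₀ ∈ Γ) (hsm : (m : WithTop ℤ) ≤ v (σ ^ s - (γ₀ : R)))
    (hleast : ∀ s' : ℕ, 0 < s' →
      (∃ γ : Rˣ, γ ∈ Γ ∧ (m : WithTop ℤ) ≤ v (σ ^ s' - (γ : R))) → s ≤ s') :
    ∀ n : ℕ, 1 ≤ n → ∀ γ : Rˣ, γ ∈ Γ →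
      ((m : WithTop ℤ) ≤ v (σ ^ (s * n) - (γ : R)) ↔
        (m : WithTop ℤ) ≤ v ((γ : R) * ((γ₀⁻¹ ^ n : Rˣ) : R) - 1)) := by
  intro n hn γ hγ
  by_cases h1 : (1 : R) = 0
  · have hall : ∀ x : R, v x = ⊤ := fun x => (hv0 x).2 (by
      calc x = x * 1 := (mul_one x).symm
        _ = x * 0 := by rw [h1]
        _ = 0 := mul_zero x)
    simp [hall]
  -- v 1 = 0
  have hv1 : v 1 = 0 := by
    have h := hvmul 1 1
    rw [one_mul] at h
    have hne : v 1 ≠ ⊤ := fun h' => h1 ((hv0 1).1 h')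
    obtain ⟨a, ha⟩ := WithTop.ne_top_iff_exists.mp hne
    rw [← ha] at h ⊢
    have h2 : a = a + a := by exact_mod_cast h
    exact_mod_cast (by omega : a = 0)
  have hune : ∀ u : Rˣ, (u : R) ≠ 0 := by
    intro u h
    have h' := u.mul_inv
    rw [h, zero_mul] at h'
    exact h1 h'.symm
  have vunit : ∀ u : Rˣ, v (u : R) = 0 := by
    intro u
    have h := hvmul (u : R) ((u⁻¹ : Rˣ) : R)
    rw [Units.mul_inv, hv1] at h
    have h2' := hnonneg _ (hune u⁻¹)
    refine le_antisymm ?_ (hnonneg _ (hune u))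
    calc v (u : R) = v (u : R) + 0 := (add_zero _).symm
      _ ≤ v (u : R) + v ((u⁻¹ : Rˣ) : R) := add_le_add le_rfl h2'
      _ = 0 := h.symm
  have hm1 : v (-1 : R) = 0 := by simpa using vunit (-1)
  have vneg : ∀ x : R, v (-x) = v x := by
    intro x
    rw [← neg_one_mul, hvmul, hm1, zero_add]
  have vpow : ∀ (x : R), 0 ≤ v x → ∀ k : ℕ, 0 ≤ v (x ^ k) := by
    intro x hx k
    induction k with
    | zero => simp [hv1]
    | succ k ih => rw [pow_succ, hvmul]; exact add_nonneg ih hx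
  by_cases hm0 : m = 0
  · subst hm0
    have hall : ∀ x : R, (0 : WithTop ℤ) ≤ v x := by
      intro x
      by_cases hx : x = 0
      · simp [(hv0 x).2 hx]
      · exact hnonneg x hx
    simp only [Nat.cast_zero]
    exact ⟨fun _ => hall _, fun _ => hall _⟩
  -- σ ≠ 0
  have hσ : σ ≠ 0 := by
    intro h
    rw [h, zero_pow hs.ne', zero_sub, vneg, vunit] at hsm
    have : m ≤ 0 := by exact_mod_cast hsm
    omega
  have vσ := hnonneg σ hσ
  -- v (σ^(s k) - γ₀^k) ≥ m for all k
  have hB : ∀ k : ℕ, (m : WithTop ℤ) ≤ v (σ ^ (s * k) - (γ₀ : R) ^ k) := by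
    intro k
    induction k with
    | zero =>
      have h0 : σ ^ (s * 0) - (γ₀ : R) ^ 0 = 0 := by simp
      rw [(hv0 _).2 h0]
      exact le_top
    | succ k ih =>
      have hid : σ ^ (s * (k + 1)) - (γ₀ : R) ^ (k + 1)
          = σ ^ s * (σ ^ (s * k) - (γ₀ : R) ^ k) + (σ ^ s - (γ₀ : R)) * (γ₀ : R) ^ k := by
        rw [show s * (k + 1) = s + s * k by ring, pow_add, pow_succ']
        noncomm_ring
      rw [hid]
      refine le_trans (le_min ?_ ?_) (hvadd _ _)
      · rw [hvmul]
        calc (m : WithTop ℤ) = 0 + m := (zero_add _).symm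
          _ ≤ v (σ ^ s) + v (σ ^ (s * k) - (γ₀ : R) ^ k) := add_le_add (vpow σ vσ s) ih
      · rw [hvmul, show ((γ₀ : R) ^ k) = ((γ₀ ^ k : Rˣ) : R) from
          (Units.val_pow_eq_pow_val _ _).symm, vunit, add_zero]
        exact hsm
  -- key rewriting of the RHS
  have key : v ((γ : R) * ((γ₀⁻¹ ^ n : Rˣ) : R) - 1) = v ((γ₀ : R) ^ n - (γ : R)) := by
    have hone : (γ₀ : R) ^ n * ((γ₀⁻¹ ^ n : Rˣ) : R) = 1 := by
      rw [inv_pow, ← Units.val_pow_eq_pow_val, Units.mul_inv]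
    have h1' : ((γ : R) - (γ₀ : R) ^ n) * ((γ₀⁻¹ ^ n : Rˣ) : R)
        = (γ : R) * ((γ₀⁻¹ ^ n : Rˣ) : R) - 1 := by
      rw [sub_mul, hone]
    rw [← h1', hvmul, vunit, add_zero, ← vneg, neg_sub]
  rw [key]
  constructor
  · intro hA
    have hC : (γ₀ : R) ^ n - (γ : R)
        = (σ ^ (s * n) - (γ : R)) + -(σ ^ (s * n) - (γ₀ : R) ^ n) := by abel
    rw [hC]
    refine le_trans (le_min hA ?_) (hvadd _ _)
    rw [vneg]
    exact hB n
  · intro hC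
    have hA : σ ^ (s * n) - (γ : R)
        = (σ ^ (s * n) - (γ₀ : R) ^ n) + ((γ₀ : R) ^ n - (γ : R)) := by abel
    rw [hA]
    exact le_trans (le_min (hB n) hC) (hvadd _ _)
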